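/- Let A be a Hermitian 2×2 complex matrix with a₂₁ ≠ 0, let α be a real number with e^{iα} = a₂₁/|a₂₁|, and let φ ∈ [−π/4, π/4] satisfy 2|a₂₁|·cos(2φ) = (a₁₁ − a₂₂)·sin(2φ). Then both off-diagonal entries of U(φ,α)* · A · U(φ,α) are zero. -/

import Mathlib

open Matrix Real Complex

/-- The complex Jacobi rotation `U(φ, α)` of order two. -/
noncomputable def jacobiRotation (φ α : ℝ) : Matrix (Fin 2) (Fin 2) ℂ :=
  !![(Real.cos φ : ℂ), -(Complex.exp (-(α : ℂ) * Complex.I) * (Real.sin φ : ℂ));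
     Complex.exp ((α : ℂ) * Complex.I) * (Real.sin φ : ℂ), (Real.cos φ : ℂ)]

theorem jacobiRotation_annihilates_offdiagonal (A : Matrix (Fin 2) (Fin 2) ℂ)
    (hA : A.IsHermitian) (h21 : A 1 0 ≠ 0) (α : ℝ)
    (hα : Complex.exp ((α : ℂ) * Complex.I) = A 1 0 / ((‖A 1 0‖ : ℝ) : ℂ))
    (φ : ℝ) (hφ : φ ∈ Set.Icc (-(π / 4)) (π / 4))
    (htan : 2 * ‖A 1 0‖ * Real.cos (2 * φ) =
      ((A 0 0).re - (A 1 1).re) * Real.sin (2 * φ)) :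
    ((jacobiRotation φ α)ᴴ * A * jacobiRotation φ α) 0 1 = 0 ∧
    ((jacobiRotation φ α)ᴴ * A * jacobiRotation φ α) 1 0 = 0 := by
  set b : ℝ := ‖A 1 0‖ with hb
  set a : ℝ := (A 0 0).re with ha
  set d : ℝ := (A 1 1).re with hd
  have hb0 : (b : ℂ) ≠ 0 := by
    simp [hb, norm_ne_zero_iff.mpr h21]
  have ha10 : A 1 0 = (b : ℂ) * Complex.exp ((α : ℂ) * Complex.I) := by
    rw [hα]; field_simp
  have c1 : (starRingEnd ℂ) (Complex.exp ((α : ℂ) * Complex.I)) =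
      Complex.exp (-((α : ℂ) * Complex.I)) := by
    rw [← Complex.exp_conj]; congr 1
    simp only [_root_.map_mul, Complex.conj_ofReal, Complex.conj_I]; ring
  have c2 : (starRingEnd ℂ) (Complex.exp (-((α : ℂ) * Complex.I))) =
      Complex.exp ((α : ℂ) * Complex.I) := by
    rw [← Complex.exp_conj]; congr 1
    simp only [_root_.map_neg, _root_.map_mul, Complex.conj_ofReal, Complex.conj_I]; ring
  have ha01 : A 0 1 = (b : ℂ) * Complex.exp (-((α : ℂ) * Complex.I)) := by
    rw [← hA.apply 0 1, ha10, RCLike.star_def, _root_.map_mul, Complex.conj_ofReal, c1]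
  have ha00 : A 0 0 = (a : ℂ) := (hA.coe_re_apply_self 0).symm
  have ha11 : A 1 1 = (d : ℂ) := (hA.coe_re_apply_self 1).symm
  have hE : Complex.exp (-((α : ℂ) * Complex.I)) * Complex.exp ((α : ℂ) * Complex.I) = 1 := by
    rw [← Complex.exp_add]; ring_nf; exact Complex.exp_zero
  have hc : (b : ℂ) * ((Real.cos φ : ℂ) ^ 2 - (Real.sin φ : ℂ) ^ 2) +
      ((d : ℂ) - (a : ℂ)) * (Real.sin φ : ℂ) * (Real.cos φ : ℂ) = 0 := by
    have h1 : Real.cos (2 * φ) = Real.cos φ ^ 2 - Real.sin φ ^ 2 := by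
      rw [Real.cos_two_mul]; nlinarith [Real.sin_sq_add_cos_sq φ]
    have h2 : Real.sin (2 * φ) = 2 * Real.sin φ * Real.cos φ := Real.sin_two_mul φ
    rw [h1, h2] at htan
    have h3 : (b : ℝ) * (Real.cos φ ^ 2 - Real.sin φ ^ 2) +
        (d - a) * Real.sin φ * Real.cos φ = 0 := by nlinarith
    exact_mod_cast congrArg (fun x : ℝ => (x : ℂ)) h3
  constructor
  · simp [jacobiRotation, Matrix.mul_apply, Matrix.conjTranspose_apply,
      Fin.sum_univ_two, star_neg, star_mul', RCLike.star_def, neg_mul, c1, c2,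
      Complex.conj_ofReal, ha00, ha01, ha10, ha11,
      -Complex.ofReal_cos, -Complex.ofReal_sin]
    linear_combination (Complex.exp (-((α : ℂ) * Complex.I))) * hc -
      ((b : ℂ) * Complex.exp (-((α : ℂ) * Complex.I)) * (Real.sin φ : ℂ) ^ 2) * hE
  · simp [jacobiRotation, Matrix.mul_apply, Matrix.conjTranspose_apply,
      Fin.sum_univ_two, star_neg, star_mul', RCLike.star_def, neg_mul, c1, c2,
      Complex.conj_ofReal, ha00, ha01, ha10, ha11,
      -Complex.ofReal_cos, -Complex.ofReal_sin]
    linear_combination (Complex.exp ((α : ℂ) * Complex.I)) * hc -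
      ((b : ℂ) * Complex.exp ((α : ℂ) * Complex.I) * (Real.sin φ : ℂ) ^ 2) * hE
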